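/- If a map φ: (M², g) → (Nⁿ, h) from a 2-dimensional Riemannian manifold is f-biharmonic for a positive function f = α, then for any conformal change of metric ḡ = λ²g (λ a positive smooth function), the map φ: (M², ḡ) → (Nⁿ, h) is f-biharmonic for f = αλ². -/

import Mathlib

universe u v

/-- Abstract setting for a fixed map `φ : M² → (Nⁿ, h)` from a two-dimensional
manifold, considered with respect to varying Riemannian metrics on the domain:
`Metric` is the set of Riemannian metrics on `M²`, `rescale f g` is the pointwise
conformal rescaling `f·g` of the metric `g` by a positive function `f`, and
`IsFBiharmonic g f` says that `φ : (M², g) → (Nⁿ, h)` is an `f`-biharmonic map,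
i.e. `f·τ₂(φ) + (Δf)·τ(φ) + 2∇^φ_{grad f}τ(φ) = 0` w.r.t. `g`. -/
structure ConformalSetting (M : Type u) where
  /-- the Riemannian metrics on `M²` -/
  Metric : Type v
  /-- smoothness predicate for real functions on `M` -/
  smooth : (M → ℝ) → Prop
  smooth_const : ∀ c : ℝ, smooth fun _ => c
  /-- pointwise conformal rescaling of a metric by a positive function: `(f, g) ↦ f·g` -/
  rescale : (M → ℝ) → Metric → Metric
  rescale_rescale : ∀ (a b : M → ℝ) (g : Metric),
    rescale a (rescale b g) = rescale (fun x => a x * b x) g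
  rescale_one : ∀ g : Metric, rescale (fun _ => (1 : ℝ)) g = g
  /-- `φ : (M², g) → (Nⁿ, h)` is an `f`-biharmonic map -/
  IsFBiharmonic : Metric → (M → ℝ) → Prop

namespace ConformalSetting

variable {M : Type u} (S : ConformalSetting M)

/-- `φ : (M², g) → (Nⁿ, h)` is a biharmonic map (`f`-biharmonic with `f ≡ 1`). -/
def IsBiharmonic (g : S.Metric) : Prop := S.IsFBiharmonic g fun _ => (1 : ℝ)

/-- **Theorem A** (for two-dimensional domains): `φ : (M², g) → (Nⁿ, h)` is
`f`-biharmonic if and only if `φ : (M², f⁻¹g) → (Nⁿ, h)` is biharmonic. -/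
def ThmA : Prop :=
  ∀ (g : S.Metric) (f : M → ℝ), S.smooth f → (∀ x, 0 < f x) →
    (S.IsFBiharmonic g f ↔ S.IsBiharmonic (S.rescale (fun x => (f x)⁻¹) g))

end ConformalSetting

/-- If a map `φ : (M², g) → (Nⁿ, h)` from a 2-dimensional Riemannian
manifold is `f`-biharmonic for a positive function `f = α`, then for any conformal
change of metric `ḡ = λ²g` (`λ` a positive smooth function), the map
`φ : (M², ḡ) → (Nⁿ, h)` is `f`-biharmonic for `f = αλ²`. -/
theorem fBiharmonic_conformal_invariance {M : Type u} (S : ConformalSetting M)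
    (hA : S.ThmA) (g : S.Metric) (α lam : M → ℝ)
    (hαsm : S.smooth α) (hαpos : ∀ x, 0 < α x)
    (hlsm : S.smooth fun x => lam x ^ 2) (hlpos : ∀ x, 0 < lam x)
    (hmul : S.smooth fun x => α x * lam x ^ 2)
    (hfb : S.IsFBiharmonic g α) :
    S.IsFBiharmonic (S.rescale (fun x => lam x ^ 2) g) (fun x => α x * lam x ^ 2) := by
  rw [hA _ _ hmul (fun x => mul_pos (hαpos x) (pow_pos (hlpos x) 2))]
  rw [S.rescale_rescale]
  have : (fun x => (α x * lam x ^ 2)⁻¹ * lam x ^ 2) = fun x => (α x)⁻¹ := by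
    funext x
    field_simp [(hαpos x).ne', (pow_pos (hlpos x) 2).ne']
    ring_nf
    exact mul_inv_cancel₀ (hlpos x).ne'
  rw [this]
  exact (hA g α hαsm hαpos).mp hfb
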